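/- In an NIP theory, if a type p ∈ S(B) Lascar-splits over A ⊆ B, then p forks over A. -/

import Mathlib

open FirstOrder Cardinal

universe u

variable {L : FirstOrder.Language.{u, u}} {M : Type u} [L.Structure M]

/-- A formula in `m` free variables together with a tuple of parameters from `M`. -/
structure PFormula (L : FirstOrder.Language.{u, u}) (M : Type u) [L.Structure M] (m : ℕ) where
  n : ℕ
  toFormula : L.Formula (Fin m ⊕ Fin n)
  par : Fin n → M

namespace PFormula

variable {m : ℕ}

/-- Realization of a parametrized formula by an `m`-tuple. -/
def Realize (ψ : PFormula L M m) (a : Fin m → M) : Prop :=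
  ψ.toFormula.Realize (Sum.elim a ψ.par)

/-- Realization of a parametrized formula in one variable by an element. -/
def Realize1 (ψ : PFormula L M 1) (a : M) : Prop :=
  ψ.Realize fun _ => a

/-- Negation of a parametrized formula. -/
def not (ψ : PFormula L M m) : PFormula L M m :=
  ⟨ψ.n, ψ.toFormula.not, ψ.par⟩

/-- The parameters of `ψ` all lie in `B`. -/
def Over (ψ : PFormula L M m) (B : Set M) : Prop :=
  ∀ i, ψ.par i ∈ B

end PFormula

/-- Two tuples have the same type over the parameter set `A`. -/
def SameTypeOver (L : FirstOrder.Language.{u, u}) {M : Type u} [L.Structure M]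
    (A : Set M) {γ : Type} (b c : γ → M) : Prop :=
  ∀ (k : ℕ) (φ : L.Formula (γ ⊕ Fin k)) (a : Fin k → M),
    (∀ i, a i ∈ A) → (φ.Realize (Sum.elim b a) ↔ φ.Realize (Sum.elim c a))

/-- A sequence of `d`-tuples, indexed by a linear order, is indiscernible over `A`. -/
def IndiscTupleSeqOver (L : FirstOrder.Language.{u, u}) {M : Type u} [L.Structure M]
    (A : Set M) {ι : Type*} [LinearOrder ι] {d : ℕ} (f : ι → Fin d → M) : Prop :=
  ∀ (n : ℕ) (s t : Fin n → ι), StrictMono s → StrictMono t →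
    SameTypeOver L A (fun q : Fin n × Fin d => f (s q.1) q.2)
      (fun q : Fin n × Fin d => f (t q.1) q.2)

/-- A sequence of elements, indexed by a linear order, is indiscernible over `A`. -/
def IndiscSeqOver (L : FirstOrder.Language.{u, u}) {M : Type u} [L.Structure M]
    (A : Set M) {ι : Type*} [LinearOrder ι] (f : ι → M) : Prop :=
  ∀ (n : ℕ) (s t : Fin n → ι), StrictMono s → StrictMono t →
    SameTypeOver L A (fun i => f (s i)) (fun i => f (t i))

/-- A family of elements is an indiscernible *set* over `A`: the type of a tuple of
distinct elements depends only on its length. -/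
def IndiscSetOver (L : FirstOrder.Language.{u, u}) {M : Type u} [L.Structure M]
    (A : Set M) {ι : Type*} (f : ι → M) : Prop :=
  ∀ (n : ℕ) (s t : Fin n → ι), Function.Injective s → Function.Injective t →
    SameTypeOver L A (fun i => f (s i)) (fun i => f (t i))

/-- `p` is a complete consistent `m`-type over `B`: all parameters come from `B`, for each
formula over `B` it contains the formula or its negation, and every finite subset is
realized (in the monster). -/
def IsTypeOver {m : ℕ} (p : Set (PFormula L M m)) (B : Set M) : Prop :=
  (∀ ψ ∈ p, ψ.Over B) ∧
  (∀ ψ : PFormula L M m, ψ.Over B → ψ ∈ p ∨ ψ.not ∈ p) ∧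
  (∀ s : Finset (PFormula L M m), ↑s ⊆ p → ∃ a : Fin m → M, ∀ ψ ∈ s, ψ.Realize a)

/-- `p` is finitely satisfiable in `A`: every finite subset of `p` is realized by a tuple
from `A`. -/
def FinSatIn {m : ℕ} (p : Set (PFormula L M m)) (A : Set M) : Prop :=
  ∀ s : Finset (PFormula L M m), ↑s ⊆ p →
    ∃ a : Fin m → M, (∀ i, a i ∈ A) ∧ ∀ ψ ∈ s, ψ.Realize a

/-- The complete type of an element `a` over the set `C`. -/
def tpOver (L : FirstOrder.Language.{u, u}) {M : Type u} [L.Structure M]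
    (a : M) (C : Set M) : Set (PFormula L M 1) :=
  {ψ | ψ.Over C ∧ ψ.Realize1 a}

/-- `p` (a type with parameters in `B`) does not split over `A`. -/
def DoesNotSplitOver {m : ℕ} (p : Set (PFormula L M m)) (B A : Set M) : Prop :=
  ∀ (n : ℕ) (b c : Fin n → M) (φ : L.Formula (Fin m ⊕ Fin n)),
    (∀ i, b i ∈ B) → (∀ i, c i ∈ B) → SameTypeOver L A b c →
    ((⟨n, φ, b⟩ : PFormula L M m) ∈ p ↔ (⟨n, φ, c⟩ : PFormula L M m) ∈ p)

/-- `p` (a type over `B`) is definable over `A`. -/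
def DefinableOver {m : ℕ} (p : Set (PFormula L M m)) (B A : Set M) : Prop :=
  ∀ (n : ℕ) (φ : L.Formula (Fin m ⊕ Fin n)),
    ∃ (k : ℕ) (d : L.Formula (Fin n ⊕ Fin k)) (e : Fin k → M), (∀ i, e i ∈ A) ∧
      ∀ b : Fin n → M, (∀ i, b i ∈ B) →
        ((⟨n, φ, b⟩ : PFormula L M m) ∈ p ↔ d.Realize (Sum.elim b e))

/-- The parametrized formula `ψ` divides over `A`. -/
def PFormula.Divides {m : ℕ} (ψ : PFormula L M m) (A : Set M) : Prop :=
  ∃ (f : ℕ → Fin ψ.n → M) (k : ℕ), 0 < k ∧ f 0 = ψ.par ∧ IndiscTupleSeqOver L A f ∧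
    ∀ s : Finset ℕ, s.card = k →
      ¬ ∃ a : Fin m → M, ∀ i ∈ s, ψ.toFormula.Realize (Sum.elim a (f i))

/-- The (partial) type `p` forks over `A`: some finite subset of `p` implies a finite
disjunction of formulas each of which divides over `A`. -/
def ForksOver {m : ℕ} (p : Set (PFormula L M m)) (A : Set M) : Prop :=
  ∃ (r : ℕ) (ψs : Fin r → PFormula L M m), (∀ j, (ψs j).Divides A) ∧
    ∃ s : Finset (PFormula L M m), ↑s ⊆ p ∧
      ∀ a : Fin m → M, (∀ χ ∈ s, χ.Realize a) → ∃ j, (ψs j).Realize a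

/-- `p` splits strongly over `A`. -/
def SplitsStronglyOver {m : ℕ} (p : Set (PFormula L M m)) (A : Set M) : Prop :=
  ∃ (n : ℕ) (f : ℕ → Fin n → M) (φ : L.Formula (Fin m ⊕ Fin n)),
    IndiscTupleSeqOver L A f ∧
    (⟨n, φ, f 0⟩ : PFormula L M m) ∈ p ∧ (PFormula.not ⟨n, φ, f 1⟩ : PFormula L M m) ∈ p

/-- Two tuples are of Lascar distance one over `A`: they lie on a common
`A`-indiscernible sequence. -/
def LascarDistOne (L : FirstOrder.Language.{u, u}) {M : Type u} [L.Structure M]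
    (A : Set M) {n : ℕ} (b c : Fin n → M) : Prop :=
  ∃ f : ℕ → Fin n → M, IndiscTupleSeqOver L A f ∧ ∃ i j : ℕ, f i = b ∧ f j = c

/-- Two tuples have the same Lascar strong type over `A` (finite Lascar distance). -/
def SameLstp (L : FirstOrder.Language.{u, u}) {M : Type u} [L.Structure M]
    (A : Set M) {n : ℕ} (b c : Fin n → M) : Prop :=
  Relation.ReflTransGen (fun x y => LascarDistOne L A x y) b c

/-- `p` (a type over `B`) Lascar-splits over `A`. -/
def LascarSplitsOver {m : ℕ} (p : Set (PFormula L M m)) (B A : Set M) : Prop :=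
  ∃ (n : ℕ) (b c : Fin n → M) (φ : L.Formula (Fin m ⊕ Fin n)),
    (∀ i, b i ∈ B) ∧ (∀ i, c i ∈ B) ∧ SameLstp L A b c ∧
    (⟨n, φ, b⟩ : PFormula L M m) ∈ p ∧ (PFormula.not ⟨n, φ, c⟩ : PFormula L M m) ∈ p

/-- The structure `M` is NIP ("dependent"): no formula alternates infinitely often on an
indiscernible sequence. -/
def IsNIP (L : FirstOrder.Language.{u, u}) (M : Type u) [L.Structure M] : Prop :=
  ∀ (d k : ℕ) (φ : L.Formula (Fin d ⊕ Fin k)) (f : ℕ → Fin d → M) (c : Fin k → M),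
    IndiscTupleSeqOver L (∅ : Set M) f →
    ¬ ({i : ℕ | φ.Realize (Sum.elim (f i) c)}.Infinite ∧
        {i : ℕ | ¬ φ.Realize (Sum.elim (f i) c)}.Infinite)

/-- The subset `N` of the monster is `κ`-saturated: every type over a subset of `N` of
size `< κ` which is finitely satisfiable is realized inside `N`. -/
def SetSaturated (L : FirstOrder.Language.{u, u}) {M : Type u} [L.Structure M]
    (N : Set M) (κ : Cardinal.{u}) : Prop :=
  ∀ C : Set M, C ⊆ N → #C < κ → ∀ (m : ℕ) (p : Set (PFormula L M m)),
    (∀ ψ ∈ p, ψ.Over C) →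
    (∀ s : Finset (PFormula L M m), ↑s ⊆ p → ∃ a : Fin m → M, ∀ ψ ∈ s, ψ.Realize a) →
    ∃ a : Fin m → M, (∀ i, a i ∈ N) ∧ ∀ ψ ∈ p, ψ.Realize a

/-- `M` is a monster model: it is saturated in every cardinality below `#M`. -/
def IsMonster (L : FirstOrder.Language.{u, u}) (M : Type u) [L.Structure M] : Prop :=
  ∀ κ : Cardinal.{u}, κ < #M → SetSaturated L (Set.univ : Set M) κ

/-- The average type of an `ω`-indexed indiscernible set over `C`: formulas over `C` true
of all but finitely many elements of the set. -/
def AvSet (L : FirstOrder.Language.{u, u}) {M : Type u} [L.Structure M]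
    (f : ℕ → M) (C : Set M) : Set (PFormula L M 1) :=
  {ψ | ψ.Over C ∧ {i : ℕ | ¬ ψ.Realize1 (f i)}.Finite}

/-- The average type of an endless indiscernible sequence over `C`: formulas over `C`
true of all sufficiently late elements of the sequence. -/
def AvSeq (L : FirstOrder.Language.{u, u}) {M : Type u} [L.Structure M]
    {ι : Type*} [LinearOrder ι] (f : ι → M) (C : Set M) : Set (PFormula L M 1) :=
  {ψ | ψ.Over C ∧ ∃ i₀ : ι, ∀ i ≥ i₀, ψ.Realize1 (f i)}

/-- The algebraic closure of `A` in `M`. -/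
def aclSet (L : FirstOrder.Language.{u, u}) {M : Type u} [L.Structure M]
    (A : Set M) : Set M :=
  {a | ∃ ψ : PFormula L M 1, ψ.Over A ∧ ψ.Realize1 a ∧ {x : M | ψ.Realize1 x}.Finite}

/-- `p ∈ S(A)` is generically stable: there is a nonforking sequence of realizations of
`p` over `A` which is an indiscernible set. -/
def GenericallyStable (p : Set (PFormula L M 1)) (A : Set M) : Prop :=
  ∃ f : ℕ → M,
    (∀ i, ∀ ψ ∈ p, ψ.Realize1 (f i)) ∧
    IndiscSetOver L A f ∧
    ∀ i : ℕ, ¬ ForksOver (tpOver L (f i) (A ∪ f '' {j | j < i})) A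

/-- The Boolean algebra of `B`-definable subsets of `A^m`. -/
def DefSub (L : FirstOrder.Language.{u, u}) {M : Type u} [L.Structure M]
    (A B : Set M) (m : ℕ) : Set (Set (Fin m → M)) :=
  {S | ∃ ψ : PFormula L M m, ψ.Over B ∧ S = {a | (∀ i, a i ∈ A) ∧ ψ.Realize a}}

/-- An ultrafilter on the Boolean algebra of `B`-definable subsets of `A^m`. -/
structure UltraOn (L : FirstOrder.Language.{u, u}) {M : Type u} [L.Structure M]
    (A B : Set M) (m : ℕ) where
  sets : Set (Set (Fin m → M))
  subset_def : sets ⊆ DefSub L A B m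
  inter_mem : ∀ S ∈ sets, ∀ T ∈ sets, S ∩ T ∈ sets
  superset_mem : ∀ S ∈ sets, ∀ T ∈ DefSub L A B m, S ⊆ T → T ∈ sets
  nonempty_mem : ∀ S ∈ sets, S.Nonempty
  ultra : ∀ S ∈ DefSub L A B m,
    S ∈ sets ∨ ({a : Fin m → M | ∀ i, a i ∈ A} \ S) ∈ sets

/-- The average type of an ultrafilter on `Def_m(A,B)` over `B`. -/
def AvU {A B : Set M} {m : ℕ} (U : UltraOn L A B m) : Set (PFormula L M m) :=
  {ψ | ψ.Over B ∧ {a : Fin m → M | (∀ i, a i ∈ A) ∧ ψ.Realize a} ∈ U.sets}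

/- ========================================================================== -/
/- Auxiliary material for the proof.                                          -/
/- ========================================================================== -/

namespace FirstOrder.Language.Formula

/-- Existential quantification along a relabelling (the older Mathlib `iExs`). -/
noncomputable def iExsR {L : FirstOrder.Language.{u, u}} {α β γ : Type*} [Finite γ]
    (φ : L.Formula α) (f : α → β ⊕ γ) : L.Formula β :=
  (φ.relabel f).iExs γ

theorem realize_iExsR {L : FirstOrder.Language.{u, u}} {M : Type u} [L.Structure M]
    {α β γ : Type*} [Finite γ] {f : α → β ⊕ γ} {φ : L.Formula α} {v : β → M} :
    (φ.iExsR f).Realize v ↔ ∃ (i : γ → M), φ.Realize (fun a => Sum.elim v i (f a)) := by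
  rw [iExsR, realize_iExs]
  simp only [realize_relabel]
  rfl

end FirstOrder.Language.Formula

namespace LSF

open FirstOrder Language

variable {L : FirstOrder.Language.{u, u}} {M : Type u} [L.Structure M]

/-- Finite conjunction of a list of formulas. -/
def conjList : List (L.Formula α) → L.Formula α
  | [] => ⊤
  | φ :: l => φ ⊓ conjList l

theorem realize_conjList {l : List (L.Formula α)} {v : α → M} :
    (conjList l).Realize v ↔ ∀ φ ∈ l, Formula.Realize φ v := by
  induction l with
  | nil => simp [conjList, Formula.realize_top]
  | cons φ l ih => simp [conjList, Formula.realize_inf, ih]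

/-- Finite conjunction over `Fin k`. -/
def conjFin (k : ℕ) (F : Fin k → L.Formula α) : L.Formula α :=
  conjList ((List.finRange k).map F)

theorem realize_conjFin {k : ℕ} {F : Fin k → L.Formula α} {v : α → M} :
    (conjFin k F).Realize v ↔ ∀ i : Fin k, Formula.Realize (F i) v := by
  simp [conjFin, realize_conjList]

theorem _root_.SameTypeOver.comp {A : Set M} {γ δ : Type} {b c : γ → M}
    (h : SameTypeOver L A b c) (e : δ → γ) :
    SameTypeOver L A (b ∘ e) (c ∘ e) := by
  intro k φ a ha
  have := h k (φ.relabel (Sum.map e id)) a ha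
  rwa [Formula.realize_relabel, Formula.realize_relabel,
    show Sum.elim b a ∘ Sum.map e id = Sum.elim (b ∘ e) a by
      funext x; cases x <;> rfl,
    show Sum.elim c a ∘ Sum.map e id = Sum.elim (c ∘ e) a by
      funext x; cases x <;> rfl] at this

theorem _root_.SameTypeOver.mono {A A' : Set M} {γ : Type} {b c : γ → M}
    (h : SameTypeOver L A b c) (hAA : A' ⊆ A) : SameTypeOver L A' b c :=
  fun k φ a ha => h k φ a fun i => hAA (ha i)

theorem _root_.IndiscTupleSeqOver.mono {A A' : Set M} {d : ℕ} {f : ℕ → Fin d → M}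
    (h : IndiscTupleSeqOver L A f) (hAA : A' ⊆ A) : IndiscTupleSeqOver L A' f :=
  fun n s t hs ht => (h n s t hs ht).mono hAA

theorem _root_.IndiscTupleSeqOver.comp {A : Set M} {d : ℕ} {f : ℕ → Fin d → M}
    (h : IndiscTupleSeqOver L A f) {σ : ℕ → ℕ} (hσ : StrictMono σ) :
    IndiscTupleSeqOver L A (f ∘ σ) :=
  fun n s t hs ht => h n (σ ∘ s) (σ ∘ t) (hσ.comp hs) (hσ.comp ht)

theorem indisc_const {A : Set M} {d : ℕ} (w : Fin d → M) :
    IndiscTupleSeqOver L A (fun _ : ℕ => w) := by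
  intro n s t _ _ k φ a _
  exact Iff.rfl

/-- Discrete intermediate value: a truth descent point in a finite chain. -/
theorem exists_descent {P : ℕ → Prop} {N : ℕ} (h0 : P 0) (hN : ¬ P N) :
    ∃ j < N, P j ∧ ¬ P (j + 1) := by
  induction N with
  | zero => exact absurd h0 hN
  | succ N ih =>
    by_cases hPN : P N
    · exact ⟨N, Nat.lt_succ_self N, hPN, hN⟩
    · obtain ⟨j, hj, hPj⟩ := ih hPN
      exact ⟨j, hj.trans (Nat.lt_succ_self N), hPj⟩

/-- Extract a finite chain from a reflexive-transitive closure. -/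
theorem exists_nat_chain {α : Type*} {r : α → α → Prop} {b c : α}
    (h : Relation.ReflTransGen r b c) :
    ∃ (N : ℕ) (x : ℕ → α), x 0 = b ∧ x N = c ∧ ∀ i < N, r (x i) (x (i + 1)) := by
  induction h with
  | refl => exact ⟨0, fun _ => b, rfl, rfl, by omega⟩
  | @tail m c' _ hmc ih =>
    obtain ⟨N, x, h0, hN, hrel⟩ := ih
    refine ⟨N + 1, fun i => if i = N + 1 then c' else x i, by simp [h0], by simp, ?_⟩
    intro i hi
    rcases Nat.lt_or_ge i N with hiN | hiN
    · simpa [Nat.ne_of_lt (by omega : i < N + 1), Nat.ne_of_lt (by omega : i + 1 < N + 1),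
        Nat.ne_of_lt hiN]
        using hrel i hiN
    · have hiN' : i = N := by omega
      subst hiN'
      simpa [Nat.ne_of_lt (by omega : i < i + 1), hN] using hmc

/-- Realization of a type over a finite set of parameters in a monster model. -/
theorem realize_of_finSat (hM : IsMonster L M) (hInf : Infinite M) {m' : ℕ}
    {C : Set M} (hC : C.Finite) {p : Set (PFormula L M m')}
    (hov : ∀ ψ ∈ p, ψ.Over C)
    (hfs : ∀ s : Finset (PFormula L M m'), ↑s ⊆ p → ∃ a : Fin m' → M, ∀ ψ ∈ s, ψ.Realize a) :
    ∃ a : Fin m' → M, ∀ ψ ∈ p, ψ.Realize a := by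
  have hlt : #↥C < Cardinal.aleph0 := hC.lt_aleph0
  have h2 : Order.succ (#↥C) < Cardinal.aleph0 := Cardinal.isSuccLimit_aleph0.succ_lt hlt
  obtain ⟨a, -, ha⟩ := hM _ (h2.trans_le (Cardinal.aleph0_le_mk M)) C (Set.subset_univ C)
    (Order.lt_succ _) m' p hov hfs
  exact ⟨a, ha⟩

theorem fin_append_apply_left {n₁ n₂ : ℕ} {α : Type*} (u : Fin n₁ → α) (v : Fin n₂ → α)
    (j : Fin (n₁ + n₂)) (h : j.val < n₁) : Fin.append u v j = u ⟨j.val, h⟩ := by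
  have hj : j = Fin.castAdd n₂ ⟨j.val, h⟩ := Fin.ext rfl
  conv_lhs => rw [hj]
  exact Fin.append_left u v _

theorem fin_append_apply_right {n₁ n₂ : ℕ} {α : Type*} (u : Fin n₁ → α) (v : Fin n₂ → α)
    (j : Fin (n₁ + n₂)) (h : ¬ j.val < n₁) :
    Fin.append u v j = v ⟨j.val - n₁, by have := j.isLt; omega⟩ := by
  have hj : j = Fin.natAdd n₁ ⟨j.val - n₁, by have := j.isLt; omega⟩ := Fin.ext (by simp; omega)
  conv_lhs => rw [hj]
  exact Fin.append_right u v _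

end LSF

namespace LSF

open FirstOrder Language

attribute [local instance] Classical.propDecidable

variable {L : FirstOrder.Language.{u, u}} {M : Type u} [L.Structure M]

/-- An "indiscernibility requirement": a formula together with two strictly
monotone selections of indices. -/
structure AReq (L : FirstOrder.Language.{u, u}) (d : ℕ) : Type u where
  n : ℕ
  ψ : L.Formula (Fin n × Fin d)
  s : Fin n → ℕ
  t : Fin n → ℕ
  hs : StrictMono s
  ht : StrictMono t

variable {d m : ℕ}

/-- The requirement only mentions indices `< K`. -/
def AReq.Bdd (r : AReq L d) (K : ℕ) : Prop := (∀ i, r.s i < K) ∧ (∀ i, r.t i < K)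

theorem AReq.Bdd.mono {r : AReq L d} {K K' : ℕ} (h : r.Bdd K) (hK : K ≤ K') : r.Bdd K' :=
  ⟨fun i => lt_of_lt_of_le (h.1 i) hK, fun i => lt_of_lt_of_le (h.2 i) hK⟩

/-- `φh(a, H i)` holds iff `i` is even. -/
def PatOn (φh : L.Formula (Fin m ⊕ Fin d)) (a : Fin m → M) {K : ℕ}
    (H : Fin K → Fin d → M) : Prop :=
  ∀ i : Fin K, (φh.Realize (Sum.elim a (H i)) ↔ Even i.val)

/-- The tuple `H` satisfies the indiscernibility requirement `r`. -/
def AgrOn {K : ℕ} (H : Fin K → Fin d → M) (r : AReq L d) (hr : r.Bdd K) : Prop :=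
  r.ψ.Realize (fun q : Fin r.n × Fin d => H ⟨r.s q.1, hr.1 q.1⟩ q.2) ↔
    r.ψ.Realize (fun q : Fin r.n × Fin d => H ⟨r.t q.1, hr.2 q.1⟩ q.2)

/-- Variable bookkeeping map for the pattern formulas. -/
def slotMap (K : ℕ) (i : Fin K) : Fin m ⊕ Fin d → (Fin K × Fin d) ⊕ Fin m :=
  Sum.elim Sum.inr fun j => Sum.inl (i, j)

/-- The formula expressing `PatOn` together with all requirements in `R`. -/
noncomputable def gammaF (φh : L.Formula (Fin m ⊕ Fin d)) (K : ℕ) (R : Finset (AReq L d))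
    (hR : ∀ r ∈ R, r.Bdd K) : L.Formula ((Fin K × Fin d) ⊕ Fin m) :=
  (conjFin K fun i =>
      if Even i.val then φh.relabel (slotMap K i) else (φh.relabel (slotMap K i)).not) ⊓
    conjList (R.attach.toList.map fun r =>
      (r.1.ψ.relabel fun q : Fin r.1.n × Fin d =>
          (Sum.inl (⟨r.1.s q.1, (hR r.1 r.2).1 q.1⟩, q.2) : (Fin K × Fin d) ⊕ Fin m)).iff
        (r.1.ψ.relabel fun q : Fin r.1.n × Fin d =>
          (Sum.inl (⟨r.1.t q.1, (hR r.1 r.2).2 q.1⟩, q.2) : (Fin K × Fin d) ⊕ Fin m)))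

theorem realize_gammaF {φh : L.Formula (Fin m ⊕ Fin d)} {K : ℕ} {R : Finset (AReq L d)}
    {hR : ∀ r ∈ R, r.Bdd K} {H : Fin K → Fin d → M} {a : Fin m → M} :
    (gammaF φh K R hR).Realize (Sum.elim (fun q : Fin K × Fin d => H q.1 q.2) a) ↔
      PatOn φh a H ∧ ∀ r (hr : r ∈ R), AgrOn H r (hR r hr) := by
  rw [gammaF, Formula.realize_inf, realize_conjFin, realize_conjList]
  constructor
  · rintro ⟨h1, h2⟩
    constructor
    · intro i
      have := h1 i
      by_cases hev : Even i.val
      · rw [if_pos hev] at this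
        rw [Formula.realize_relabel] at this
        have hcomp : (Sum.elim (fun q : Fin K × Fin d => H q.1 q.2) a) ∘ slotMap K i
            = Sum.elim a (H i) := by funext x; rcases x with x | j <;> rfl
        rw [hcomp] at this
        exact ⟨fun _ => hev, fun _ => this⟩
      · rw [if_neg hev] at this
        rw [Formula.realize_not, Formula.realize_relabel] at this
        have hcomp : (Sum.elim (fun q : Fin K × Fin d => H q.1 q.2) a) ∘ slotMap K i
            = Sum.elim a (H i) := by funext x; rcases x with x | j <;> rfl
        rw [hcomp] at this
        exact ⟨fun hc => absurd hc this, fun hc => absurd hc hev⟩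
    · intro r hr
      have := h2 _ (List.mem_map.2 ⟨⟨r, hr⟩, Finset.mem_toList.2 (Finset.mem_attach _ _), rfl⟩)
      rw [Formula.realize_iff, Formula.realize_relabel, Formula.realize_relabel] at this
      exact this
  · rintro ⟨h1, h2⟩
    constructor
    · intro i
      have hcomp : (Sum.elim (fun q : Fin K × Fin d => H q.1 q.2) a) ∘ slotMap K i
          = Sum.elim a (H i) := by funext x; rcases x with x | j <;> rfl
      by_cases hev : Even i.val
      · rw [if_pos hev, Formula.realize_relabel, hcomp]
        exact (h1 i).2 hev
      · rw [if_neg hev, Formula.realize_not, Formula.realize_relabel, hcomp]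
        exact fun hc => hev ((h1 i).1 hc)
    · intro ψ hψ
      obtain ⟨r, -, rfl⟩ := List.mem_map.1 hψ
      rw [Formula.realize_iff, Formula.realize_relabel, Formula.realize_relabel]
      exact h2 r.1 r.2

/-- The formula (over `∅`) saying: there is a `K`-tuple realizing the alternation
pattern for `x` and satisfying the requirements `R`. -/
noncomputable def thetaPF (φh : L.Formula (Fin m ⊕ Fin d)) (K : ℕ) (R : Finset (AReq L d))
    (hR : ∀ r ∈ R, r.Bdd K) : PFormula L M m :=
  ⟨0, ((gammaF φh K R hR).iExsR Sum.swap).relabel Sum.inl, Fin.elim0⟩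

theorem realize_thetaPF {φh : L.Formula (Fin m ⊕ Fin d)} {K : ℕ} {R : Finset (AReq L d)}
    {hR : ∀ r ∈ R, r.Bdd K} {a : Fin m → M} :
    (thetaPF φh K R hR : PFormula L M m).Realize a ↔
      ∃ H : Fin K → Fin d → M,
        PatOn φh a H ∧ ∀ r (hr : r ∈ R), AgrOn H r (hR r hr) := by
  show (((gammaF φh K R hR).iExsR Sum.swap).relabel Sum.inl).Realize (Sum.elim a Fin.elim0) ↔ _
  rw [Formula.realize_relabel]
  have h0 : Sum.elim a Fin.elim0 ∘ (Sum.inl : Fin m → Fin m ⊕ Fin 0) = a := rfl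
  rw [h0, Formula.realize_iExsR]
  constructor
  · rintro ⟨i, hi⟩
    refine ⟨fun k j => i (k, j), ?_⟩
    have he : (fun x => Sum.elim a i (Sum.swap x))
        = Sum.elim (fun q : Fin K × Fin d => (fun k j => i (k, j)) q.1 q.2) a := by
      funext x; rcases x with q | x <;> rfl
    rw [he] at hi
    exact realize_gammaF.1 hi
  · rintro ⟨H, hH⟩
    refine ⟨fun q => H q.1 q.2, ?_⟩
    have he : (fun x => Sum.elim a (fun q : Fin K × Fin d => H q.1 q.2) (Sum.swap x))
        = Sum.elim (fun q : Fin K × Fin d => H q.1 q.2) a := by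
      funext x; rcases x with q | x <;> rfl
    rw [he]
    exact realize_gammaF.2 hH

/-- Variable bookkeeping map for the step formulas. -/
def sigMap (t K : ℕ) :
    ((Fin K × Fin d) ⊕ Fin m) → ((Fin d ⊕ Fin (m + t * d)) ⊕ (Fin (K - (t + 1)) × Fin d)) :=
  Sum.elim
    (fun q =>
      if h : q.1.val < t then
        Sum.inl (Sum.inr (finSumFinEquiv (Sum.inr (finProdFinEquiv (⟨q.1.val, h⟩, q.2)))))
      else if h2 : q.1.val = t then Sum.inl (Sum.inl q.2)
      else Sum.inr (⟨q.1.val - (t + 1), by have := q.1.isLt; omega⟩, q.2))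
    fun x => Sum.inl (Sum.inr (finSumFinEquiv (Sum.inl x)))

/-- Parameters: `a` followed by the flattened tuple `v`. -/
def parOf (a : Fin m → M) {t : ℕ} (v : Fin t → Fin d → M) : Fin (m + t * d) → M :=
  fun x => Sum.elim a
    (fun y => v (finProdFinEquiv.symm y).1 (finProdFinEquiv.symm y).2) (finSumFinEquiv.symm x)

/-- The formula (with parameters `a, v`) saying of `y`: the tuple `v ⌢ y` extends to
a `K`-tuple realizing the alternation pattern for `a` and the requirements `R`. -/
noncomputable def sigmaPF (φh : L.Formula (Fin m ⊕ Fin d)) (t K : ℕ) (R : Finset (AReq L d))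
    (hR : ∀ r ∈ R, r.Bdd K) (a : Fin m → M) (v : Fin t → Fin d → M) : PFormula L M d :=
  ⟨m + t * d, (gammaF φh K R hR).iExsR (sigMap t K), parOf a v⟩

theorem sigmaPF_over {φh : L.Formula (Fin m ⊕ Fin d)} {t K : ℕ} {R : Finset (AReq L d)}
    {hR : ∀ r ∈ R, r.Bdd K} {a : Fin m → M} {v : Fin t → Fin d → M} :
    (sigmaPF φh t K R hR a v : PFormula L M d).Over
      (Set.range a ∪ Set.range (fun q : Fin t × Fin d => v q.1 q.2)) := by
  intro x
  show parOf a v x ∈ _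
  unfold parOf
  rcases hx : finSumFinEquiv.symm x with y | y
  · exact Or.inl ⟨y, rfl⟩
  · exact Or.inr ⟨((finProdFinEquiv.symm y).1, (finProdFinEquiv.symm y).2), rfl⟩

theorem realize_sigmaPF {φh : L.Formula (Fin m ⊕ Fin d)} {t K : ℕ} (htK : t < K)
    {R : Finset (AReq L d)} {hR : ∀ r ∈ R, r.Bdd K} {a : Fin m → M}
    {v : Fin t → Fin d → M} {y : Fin d → M} :
    (sigmaPF φh t K R hR a v : PFormula L M d).Realize y ↔
      ∃ H : Fin K → Fin d → M,
        (∀ (i : Fin K) (h : i.val < t), H i = v ⟨i.val, h⟩) ∧ H ⟨t, htK⟩ = y ∧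
        PatOn φh a H ∧ ∀ r (hr : r ∈ R), AgrOn H r (hR r hr) := by
  show ((gammaF φh K R hR).iExsR (sigMap t K)).Realize (Sum.elim y (parOf a v)) ↔ _
  rw [Formula.realize_iExsR]
  constructor
  · rintro ⟨w, hw⟩
    refine ⟨fun i j =>
      if h : i.val < t then v ⟨i.val, h⟩ j
      else if h2 : i.val = t then y j
      else w (⟨i.val - (t + 1), by have := i.isLt; omega⟩, j), ?_, ?_, ?_⟩
    · intro i h; funext j; simp only [dif_pos h]
    · funext j; simp
    · have he : (fun x => Sum.elim (Sum.elim y (parOf a v)) w (sigMap t K x))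
          = Sum.elim (fun q : Fin K × Fin d =>
              (fun (i : Fin K) j =>
                if h : i.val < t then v ⟨i.val, h⟩ j
                else if h2 : i.val = t then y j
                else w (⟨i.val - (t + 1), by have := i.isLt; omega⟩, j)) q.1 q.2) a := by
        funext x
        rcases x with ⟨i, j⟩ | x
        · by_cases h : i.val < t
          · simp only [sigMap, Sum.elim_inl, Sum.elim_inr, dif_pos h, parOf,
              Equiv.symm_apply_apply]
          · by_cases h2 : i.val = t
            · simp only [sigMap, Sum.elim_inl, dif_neg h, dif_pos h2]
            · simp only [sigMap, Sum.elim_inl, Sum.elim_inr, dif_neg h, dif_neg h2]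
        · simp only [sigMap, Sum.elim_inl, Sum.elim_inr, parOf, Equiv.symm_apply_apply]
      rw [he] at hw
      exact realize_gammaF.1 hw
  · rintro ⟨H, hpre, hat, hΓ⟩
    refine ⟨fun p => H ⟨p.1.val + (t + 1), by have := p.1.isLt; omega⟩ p.2, ?_⟩
    have he : (fun x => Sum.elim (Sum.elim y (parOf a v))
          (fun p : Fin (K - (t + 1)) × Fin d =>
            H ⟨p.1.val + (t + 1), by have := p.1.isLt; omega⟩ p.2) (sigMap t K x))
        = Sum.elim (fun q : Fin K × Fin d => H q.1 q.2) a := by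
      funext x
      rcases x with ⟨i, j⟩ | x
      · by_cases h : i.val < t
        · simp only [sigMap, Sum.elim_inl, Sum.elim_inr, dif_pos h, parOf,
            Equiv.symm_apply_apply]
          rw [hpre i h]
        · by_cases h2 : i.val = t
          · simp only [sigMap, Sum.elim_inl, dif_neg h, dif_pos h2]
            have : i = ⟨t, htK⟩ := Fin.ext h2
            rw [this, hat]
          · simp only [sigMap, Sum.elim_inl, Sum.elim_inr, dif_neg h, dif_neg h2]
            congr 1
            exact Fin.ext (by simp; omega)
      · simp only [sigMap, Sum.elim_inl, Sum.elim_inr, parOf, Equiv.symm_apply_apply]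
    rw [he]
    exact realize_gammaF.2 hΓ

/-- The invariant of the recursive construction. -/
def Inv (φh : L.Formula (Fin m ⊕ Fin d)) (a : Fin m → M) (t : ℕ)
    (v : Fin t → Fin d → M) : Prop :=
  ∀ K, t ≤ K → ∀ (R : Finset (AReq L d)) (hR : ∀ r ∈ R, r.Bdd K),
    ∃ H : Fin K → Fin d → M,
      (∀ (i : Fin K) (h : i.val < t), H i = v ⟨i.val, h⟩) ∧
      PatOn φh a H ∧ ∀ r (hr : r ∈ R), AgrOn H r (hR r hr)

theorem exists_generic (hM : IsMonster L M) (hInf : Infinite M)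
    {φh : L.Formula (Fin m ⊕ Fin d)} {F : ℕ → Fin d → M}
    (hF : IndiscTupleSeqOver L ∅ F)
    (halt : ∀ k, ∃ a : Fin m → M, ∀ i < k, (φh.Realize (Sum.elim a (F i)) ↔ Even i)) :
    ∃ a : Fin m → M, Inv φh a 0 Fin.elim0 := by
  set q : Set (PFormula L M m) :=
    {ψ | ∃ K R hR, ψ = (thetaPF φh K R hR : PFormula L M m)} with hq
  have hov : ∀ ψ ∈ q, ψ.Over (∅ : Set M) := by
    rintro ψ ⟨K, R, hR, rfl⟩ i
    exact i.elim0
  have hfs : ∀ s : Finset (PFormula L M m), ↑s ⊆ q →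
      ∃ a : Fin m → M, ∀ ψ ∈ s, ψ.Realize a := by
    intro s hs
    have hex : ∀ ψ : {ψ // ψ ∈ s}, ∃ K R hR, ψ.1 = (thetaPF φh K R hR : PFormula L M m) :=
      fun ψ => hs ψ.2
    set Kmax := s.attach.sup (fun ψ => (hex ψ).choose) with hKmax
    obtain ⟨a, ha⟩ := halt Kmax
    refine ⟨a, fun ψ hψ => ?_⟩
    obtain ⟨R, hR, hEq⟩ := (hex ⟨ψ, hψ⟩).choose_spec
    replace hEq : ψ = thetaPF φh (hex ⟨ψ, hψ⟩).choose R hR := hEq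
    rw [hEq, realize_thetaPF]
    refine ⟨fun i => F i.val, ?_, ?_⟩
    · intro i
      exact ha i.val (lt_of_lt_of_le i.isLt
        (Finset.le_sup (f := fun ψ => (hex ψ).choose) (Finset.mem_attach s ⟨ψ, hψ⟩)))
    · intro r hr
      have hst := hF r.n r.s r.t r.hs r.ht 0 (r.ψ.relabel Sum.inl) Fin.elim0
        (fun i0 => i0.elim0)
      rw [Formula.realize_relabel, Formula.realize_relabel] at hst
      exact hst
  obtain ⟨a, ha⟩ := realize_of_finSat hM hInf Set.finite_empty hov hfs
  refine ⟨a, ?_⟩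
  intro K _ R hR
  have := ha (thetaPF φh K R hR) ⟨K, R, hR, rfl⟩
  rw [realize_thetaPF] at this
  obtain ⟨H, hpat, hagr⟩ := this
  exact ⟨H, fun i h => absurd h (Nat.not_lt_zero _), hpat, hagr⟩

theorem step_exists (hM : IsMonster L M) (hInf : Infinite M)
    {φh : L.Formula (Fin m ⊕ Fin d)} {a : Fin m → M} {t : ℕ} {v : Fin t → Fin d → M}
    (hv : Inv φh a t v) : ∃ y : Fin d → M, Inv φh a (t + 1) (Fin.snoc v y) := by
  have hCfin : (Set.range a ∪ Set.range (fun q : Fin t × Fin d => v q.1 q.2)).Finite :=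
    (Set.finite_range _).union (Set.finite_range _)
  set p : Set (PFormula L M d) :=
    {ψ | ∃ K, t < K ∧ ∃ R hR, ψ = (sigmaPF φh t K R hR a v : PFormula L M d)} with hp
  have hov : ∀ ψ ∈ p, ψ.Over (Set.range a ∪ Set.range (fun q : Fin t × Fin d => v q.1 q.2)) := by
    rintro ψ ⟨K, hK, R, hR, rfl⟩
    exact sigmaPF_over
  have hfs : ∀ s : Finset (PFormula L M d), ↑s ⊆ p →
      ∃ b : Fin d → M, ∀ ψ ∈ s, ψ.Realize b := by
    intro s hs
    have hex : ∀ ψ : {ψ // ψ ∈ s},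
        ∃ K, t < K ∧ ∃ R hR, ψ.1 = (sigmaPF φh t K R hR a v : PFormula L M d) :=
      fun ψ => hs ψ.2
    set KOf : {ψ // ψ ∈ s} → ℕ := fun ψ => (hex ψ).choose with hKOf
    set ROf : {ψ // ψ ∈ s} → Finset (AReq L d) := fun ψ => (hex ψ).choose_spec.2.choose
      with hROf
    set Kmax := max (s.attach.sup KOf) (t + 1) with hKmax
    set Rbig := s.attach.sup ROf with hRbig
    have hKle : ∀ ψ : {ψ // ψ ∈ s}, KOf ψ ≤ Kmax := fun ψ =>
      le_trans (Finset.le_sup (Finset.mem_attach s ψ)) (le_max_left _ _)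
    have hRbigBdd : ∀ r ∈ Rbig, r.Bdd Kmax := by
      intro r hr
      rw [hRbig, Finset.mem_sup] at hr
      obtain ⟨ψ, -, hrψ⟩ := hr
      exact ((hex ψ).choose_spec.2.choose_spec.choose r hrψ).mono (hKle ψ)
    obtain ⟨H, hpre, hpat, hagr⟩ := hv Kmax (by omega) Rbig hRbigBdd
    refine ⟨H ⟨t, by omega⟩, fun ψ hψ => ?_⟩
    have hKt : t < KOf ⟨ψ, hψ⟩ := (hex ⟨ψ, hψ⟩).choose_spec.1
    obtain ⟨hRψ, hEq⟩ := (hex ⟨ψ, hψ⟩).choose_spec.2.choose_spec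
    replace hEq : ψ = sigmaPF φh t (KOf ⟨ψ, hψ⟩) (ROf ⟨ψ, hψ⟩) hRψ a v := hEq
    rw [hEq, realize_sigmaPF hKt]
    refine ⟨fun i => H ⟨i.val, lt_of_lt_of_le i.isLt (hKle ⟨ψ, hψ⟩)⟩, ?_, ?_, ?_, ?_⟩
    · intro i h
      exact hpre ⟨i.val, lt_of_lt_of_le i.isLt (hKle ⟨ψ, hψ⟩)⟩ h
    · rfl
    · intro i
      exact hpat ⟨i.val, lt_of_lt_of_le i.isLt (hKle ⟨ψ, hψ⟩)⟩
    · intro r hr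
      have hrBig : r ∈ Rbig := by
        rw [hRbig]
        exact Finset.mem_sup.2 ⟨⟨ψ, hψ⟩, Finset.mem_attach s _, hr⟩
      exact hagr r hrBig
  obtain ⟨y, hy⟩ := realize_of_finSat hM hInf hCfin hov hfs
  refine ⟨y, ?_⟩
  intro K hK R hR
  have hKt : t < K := by omega
  have := hy (sigmaPF φh t K R hR a v) ⟨K, hKt, R, hR, rfl⟩
  rw [realize_sigmaPF hKt] at this
  obtain ⟨H, hpre, hat, hpat, hagr⟩ := this
  refine ⟨H, ?_, hpat, hagr⟩
  intro i h'
  rcases Nat.lt_or_ge i.val t with h2 | h2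
  · have hsc : (Fin.snoc v y : Fin (t + 1) → Fin d → M) ⟨i.val, h'⟩ = v ⟨i.val, h2⟩ := by
      rw [show (⟨i.val, h'⟩ : Fin (t + 1)) = Fin.castSucc ⟨i.val, h2⟩ from Fin.ext rfl,
        Fin.snoc_castSucc]
    rw [hsc]
    exact hpre i h2
  · have h3 : i.val = t := by omega
    have hsc : (Fin.snoc v y : Fin (t + 1) → Fin d → M) ⟨i.val, h'⟩ = y := by
      rw [show (⟨i.val, h'⟩ : Fin (t + 1)) = Fin.last t from Fin.ext h3, Fin.snoc_last]
    rw [hsc, show i = (⟨t, hKt⟩ : Fin K) from Fin.ext h3]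
    exact hat

/-- The recursively constructed sequence of `d`-tuples. -/
noncomputable def seqG (hM : IsMonster L M) (hInf : Infinite M)
    (φh : L.Formula (Fin m ⊕ Fin d)) (a : Fin m → M) (ha : Inv φh a 0 Fin.elim0) :
    (t : ℕ) → {v : Fin t → Fin d → M // Inv φh a t v} := fun t =>
  Nat.rec (⟨Fin.elim0, ha⟩ : {v : Fin 0 → Fin d → M // Inv φh a 0 v})
    (fun _ ih => ⟨Fin.snoc ih.1 (step_exists hM hInf ih.2).choose,
      (step_exists hM hInf ih.2).choose_spec⟩) t

/-- The constructed infinite sequence. -/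
noncomputable def hSeq (hM : IsMonster L M) (hInf : Infinite M)
    (φh : L.Formula (Fin m ⊕ Fin d)) (a : Fin m → M) (ha : Inv φh a 0 Fin.elim0) :
    ℕ → Fin d → M := fun t =>
  (seqG hM hInf φh a ha (t + 1)).1 ⟨t, Nat.lt_succ_self t⟩

theorem seqG_coe (hM : IsMonster L M) (hInf : Infinite M)
    (φh : L.Formula (Fin m ⊕ Fin d)) (a : Fin m → M) (ha : Inv φh a 0 Fin.elim0)
    (t : ℕ) (i : Fin t) :
    (seqG hM hInf φh a ha t).1 i = hSeq hM hInf φh a ha i.val := by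
  induction t with
  | zero => exact i.elim0
  | succ t ih =>
    obtain ⟨iv, hlt⟩ := i
    rcases Nat.lt_or_ge iv t with h | h
    · have h1 : (seqG hM hInf φh a ha (t + 1)).1 ⟨iv, hlt⟩
          = (seqG hM hInf φh a ha t).1 ⟨iv, h⟩ := by
        show (Fin.snoc (seqG hM hInf φh a ha t).1 _ : Fin (t + 1) → Fin d → M) ⟨iv, hlt⟩ = _
        rw [show (⟨iv, hlt⟩ : Fin (t + 1)) = Fin.castSucc ⟨iv, h⟩ from Fin.ext rfl,
          Fin.snoc_castSucc]
      rw [h1, ih ⟨iv, h⟩]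
    · have h3 : iv = t := by omega
      subst h3
      rfl

theorem seqG_prop (hM : IsMonster L M) (hInf : Infinite M)
    (φh : L.Formula (Fin m ⊕ Fin d)) (a : Fin m → M) (ha : Inv φh a 0 Fin.elim0)
    (K : ℕ) (R : Finset (AReq L d)) (hR : ∀ r ∈ R, r.Bdd K) :
    PatOn φh a (fun i : Fin K => hSeq hM hInf φh a ha i.val) ∧
      ∀ r (hr : r ∈ R), AgrOn (fun i : Fin K => hSeq hM hInf φh a ha i.val) r (hR r hr) := by
  obtain ⟨H, hpre, hpat, hagr⟩ := (seqG hM hInf φh a ha K).2 K le_rfl R hR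
  have hH : H = fun i : Fin K => hSeq hM hInf φh a ha i.val := by
    funext i
    rw [show H i = (seqG hM hInf φh a ha K).1 ⟨i.val, i.isLt⟩ from hpre i i.isLt]
    exact seqG_coe hM hInf φh a ha K ⟨i.val, i.isLt⟩
  rw [hH] at hpat hagr
  exact ⟨hpat, hagr⟩

/-- The formula stating that two `d`-tuples are equal. -/
def eqForm (L : FirstOrder.Language.{u, u}) (d : ℕ) : L.Formula ((Fin 2 × Fin d) ⊕ Fin 0) :=
  conjFin d fun c => Term.equal (Term.var (Sum.inl ((0 : Fin 2), c)))
    (Term.var (Sum.inl ((1 : Fin 2), c)))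

theorem realize_eqForm {v : ((Fin 2 × Fin d) ⊕ Fin 0) → M} :
    (eqForm L d).Realize v ↔ ∀ c : Fin d, v (Sum.inl (0, c)) = v (Sum.inl (1, c)) := by
  simp [eqForm, realize_conjFin, Formula.realize_equal, Term.realize]

theorem no_unbounded_alt (hM : IsMonster L M) (hNIP : IsNIP L M)
    {F : ℕ → Fin d → M} (hF : IndiscTupleSeqOver L ∅ F)
    (φh : L.Formula (Fin m ⊕ Fin d))
    (halt : ∀ k, ∃ a : Fin m → M, ∀ i < k, (φh.Realize (Sum.elim a (F i)) ↔ Even i)) :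
    False := by
  have two_mono : ∀ {i j : ℕ}, i < j → StrictMono (![i, j] : Fin 2 → ℕ) := by
    intro i j hij x y hxy
    have h2 : ∀ x y : Fin 2, x < y → x = 0 ∧ y = 1 := by decide
    obtain ⟨hx, hy⟩ := h2 x y hxy
    subst hx; subst hy
    simpa using hij
  have hne : F 0 ≠ F 1 := by
    obtain ⟨a, ha⟩ := halt 2
    intro hEq
    have h0 := ha 0 (by omega)
    have h1 := ha 1 (by omega)
    rw [hEq] at h0
    exact (by decide : ¬ Even 1) (h1.mp (h0.mpr (by decide : Even 0)))
  have key : ∀ i j : ℕ, i < j → F i = F j → False := by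
    intro i j hij hEq
    have hst := hF 2 ![i, j] ![0, 1] (two_mono hij) (two_mono Nat.zero_lt_one) 0
      (eqForm L d) Fin.elim0 (fun i0 => i0.elim0)
    have hL : (eqForm L d).Realize
        (Sum.elim (fun q : Fin 2 × Fin d => F (![i, j] q.1) q.2) Fin.elim0) := by
      rw [realize_eqForm]
      intro c
      show F (![i, j] 0) c = F (![i, j] 1) c
      simp only [Matrix.cons_val_zero, Matrix.cons_val_one, Matrix.head_cons]
      rw [hEq]
    have hR := hst.mp hL
    rw [realize_eqForm] at hR
    apply hne
    funext c
    have := hR c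
    simpa using this
  have hinj : Function.Injective F := by
    intro i j hEq
    by_contra hne'
    rcases Nat.lt_or_ge i j with h | h
    · exact key i j h hEq
    · exact key j i (by omega) hEq.symm
  have hInfPi : Infinite (Fin d → M) := Infinite.of_injective F hinj
  have hInf : Infinite M := by
    by_contra h
    rw [not_infinite_iff_finite] at h
    exact not_finite (Fin d → M)
  obtain ⟨a, ha⟩ := exists_generic hM hInf hF halt
  have hpat : ∀ i : ℕ, φh.Realize (Sum.elim a (hSeq hM hInf φh a ha i)) ↔ Even i := by
    intro i
    have := (seqG_prop hM hInf φh a ha (i + 1) ∅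
      (fun r hr => absurd hr (Finset.notMem_empty r))).1 ⟨i, Nat.lt_succ_self i⟩
    exact this
  have hind : IndiscTupleSeqOver L ∅ (hSeq hM hInf φh a ha) := by
    intro nn s t hs ht k φ aa haa
    cases k with
    | succ k => exact absurd (haa 0) (Set.notMem_empty _)
    | zero =>
      set r : AReq L d := ⟨nn, φ.relabel (Sum.elim id Fin.elim0), s, t, hs, ht⟩ with hr
      set K := (Finset.univ.sup fun i : Fin nn => max (s i) (t i)) + 1 with hK
      have hbdd : r.Bdd K := by
        constructor
        · intro i
          have h1 : max (s i) (t i) ≤ Finset.univ.sup fun i : Fin nn => max (s i) (t i) :=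
            Finset.le_sup (f := fun i : Fin nn => max (s i) (t i)) (Finset.mem_univ i)
          show s i < K
          omega
        · intro i
          have h1 : max (s i) (t i) ≤ Finset.univ.sup fun i : Fin nn => max (s i) (t i) :=
            Finset.le_sup (f := fun i : Fin nn => max (s i) (t i)) (Finset.mem_univ i)
          show t i < K
          omega
      have hagr := (seqG_prop hM hInf φh a ha K {r}
        (fun r' hr' => (Finset.mem_singleton.1 hr') ▸ hbdd)).2 r (Finset.mem_singleton_self r)
      unfold AgrOn at hagr
      rw [show r.ψ = φ.relabel (Sum.elim id Fin.elim0) from rfl, Formula.realize_relabel,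
        Formula.realize_relabel] at hagr
      convert hagr using 2 <;> funext x <;> rcases x with q | x <;>
        first
          | rfl
          | exact x.elim0
  have := hNIP d m (φh.relabel Sum.swap) (hSeq hM hInf φh a ha) a hind
  apply this
  have hsw : ∀ i : ℕ, (φh.relabel Sum.swap).Realize (Sum.elim (hSeq hM hInf φh a ha i) a)
      ↔ Even i := by
    intro i
    rw [Formula.realize_relabel]
    rw [show Sum.elim (hSeq hM hInf φh a ha i) a ∘ Sum.swap
      = Sum.elim a (hSeq hM hInf φh a ha i) from funext fun x => by rcases x with x | x <;> rfl]
    exact hpat i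
  constructor
  · apply Set.infinite_of_injective_forall_mem (f := fun i : ℕ => 2 * i)
    · intro x y hxy; have h2 : 2 * x = 2 * y := hxy; omega
    · intro i
      show (φh.relabel Sum.swap).Realize _
      exact (hsw (2 * i)).mpr ⟨i, by omega⟩
  · apply Set.infinite_of_injective_forall_mem (f := fun i : ℕ => 2 * i + 1)
    · intro x y hxy; have h2 : 2 * x + 1 = 2 * y + 1 := hxy; omega
    · intro i
      show ¬ (φh.relabel Sum.swap).Realize _
      intro hc
      obtain ⟨r, hr⟩ := (hsw (2 * i + 1)).mp hc
      omega

/-- The formula `φ(x, u) ∧ ¬φ(x, v)` with the pair `(u, v)` as parameters. -/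
def divPF (φ : L.Formula (Fin m ⊕ Fin n)) (u v : Fin n → M) : PFormula L M m :=
  ⟨n + n, (φ.relabel (Sum.map id (Fin.castAdd n))) ⊓
    (φ.relabel (Sum.map id (Fin.natAdd n))).not, Fin.append u v⟩

theorem realize_divPF {φ : L.Formula (Fin m ⊕ Fin n)} {u v u' v' : Fin n → M}
    {a : Fin m → M} :
    (divPF φ u v : PFormula L M m).toFormula.Realize (Sum.elim a (Fin.append u' v')) ↔
      φ.Realize (Sum.elim a u') ∧ ¬ φ.Realize (Sum.elim a v') := by
  show (((φ.relabel (Sum.map id (Fin.castAdd n))) ⊓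
    (φ.relabel (Sum.map id (Fin.natAdd n))).not : L.Formula (Fin m ⊕ Fin (n + n)))).Realize
      (Sum.elim a (Fin.append u' v')) ↔ _
  rw [Formula.realize_inf, Formula.realize_not, Formula.realize_relabel,
    Formula.realize_relabel]
  have h1 : Sum.elim a (Fin.append u' v') ∘ Sum.map id (Fin.castAdd n) = Sum.elim a u' := by
    funext x
    rcases x with x | j
    · rfl
    · exact Fin.append_left u' v' j
  have h2 : Sum.elim a (Fin.append u' v') ∘ Sum.map id (Fin.natAdd n) = Sum.elim a v' := by
    funext x
    rcases x with x | j
    · rfl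
    · exact Fin.append_right u' v' j
  rw [h1, h2]

theorem realize_divPF' {φ : L.Formula (Fin m ⊕ Fin n)} {u v : Fin n → M} {a : Fin m → M} :
    (divPF φ u v : PFormula L M m).Realize a ↔
      φ.Realize (Sum.elim a u) ∧ ¬ φ.Realize (Sum.elim a v) :=
  realize_divPF

/-- Spread-out selection function: the `2κ` positions `lo + u r * (hi+1)`,
`hi + u r * (hi+1)`. -/
def SFun (lo hi : ℕ) {κ : ℕ} (u : Fin κ → ℕ) : Fin (2 * κ) → ℕ := fun r =>
  (if r.val % 2 = 0 then lo else hi) + u ⟨r.val / 2, by have := r.isLt; omega⟩ * (hi + 1)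

theorem SFun_strictMono {lo hi : ℕ} (hlh : lo < hi) {κ : ℕ} {u : Fin κ → ℕ}
    (hu : StrictMono u) : StrictMono (SFun lo hi u) := by
  intro r1 r2 h12
  have h12' : r1.val < r2.val := h12
  have hb1 : r1.val / 2 < κ := by have := r1.isLt; omega
  have hb2 : r2.val / 2 < κ := by have := r2.isLt; omega
  have key1 : SFun lo hi u r1
      = (if r1.val % 2 = 0 then lo else hi) + u ⟨r1.val / 2, hb1⟩ * (hi + 1) := rfl
  have key2 : SFun lo hi u r2
      = (if r2.val % 2 = 0 then lo else hi) + u ⟨r2.val / 2, hb2⟩ * (hi + 1) := rfl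
  rw [key1, key2]
  have hq : r1.val / 2 ≤ r2.val / 2 := by omega
  rcases Nat.eq_or_lt_of_le hq with he | hl
  · have hu2 : u ⟨r1.val / 2, hb1⟩ = u ⟨r2.val / 2, hb2⟩ := congrArg u (Fin.ext he)
    rw [hu2, if_pos (by omega : r1.val % 2 = 0), if_neg (by omega : ¬ r2.val % 2 = 0)]
    omega
  · have hu' : (⟨r1.val / 2, hb1⟩ : Fin κ) < ⟨r2.val / 2, hb2⟩ := Fin.mk_lt_mk.2 hl
    have hu'' := hu hu'
    have hmul : u ⟨r1.val / 2, hb1⟩ * (hi + 1) + (hi + 1)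
        ≤ u ⟨r2.val / 2, hb2⟩ * (hi + 1) := by
      have h3 := Nat.mul_le_mul_right (hi + 1) (Nat.succ_le_of_lt hu'')
      rw [Nat.succ_mul] at h3
      exact h3
    split_ifs <;> omega

theorem SFun_apply {lo hi : ℕ} {κ : ℕ} {u : Fin κ → ℕ} (q : Fin κ) (e : ℕ) (he : e < 2)
    (h2 : 2 * q.val + e < 2 * κ) :
    SFun lo hi u ⟨2 * q.val + e, h2⟩ = (if e = 0 then lo else hi) + u q * (hi + 1) := by
  show (if (2 * q.val + e) % 2 = 0 then lo else hi)
      + u ⟨(2 * q.val + e) / 2, by omega⟩ * (hi + 1) = _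
  have hc : ((2 * q.val + e) % 2 = 0) = (e = 0) := propext (by omega)
  have hd : (⟨(2 * q.val + e) / 2, by omega⟩ : Fin κ) = q := Fin.ext (by simp; omega)
  simp only [hc, hd]

/-- Encodes which of `i₀, j₀` is smaller. -/
def eIdx (i₀ j₀ : ℕ) : ℕ := if i₀ < j₀ then 0 else 1

theorem eIdx_lt (i₀ j₀ : ℕ) : eIdx i₀ j₀ < 2 := by unfold eIdx; split <;> omega

theorem eIdx_val {i₀ j₀ : ℕ} (hne : i₀ ≠ j₀) :
    (if eIdx i₀ j₀ = 0 then min i₀ j₀ else max i₀ j₀) = i₀ := by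
  rcases Nat.lt_or_ge i₀ j₀ with h | h
  · have h0 : eIdx i₀ j₀ = 0 := if_pos h
    rw [h0, if_pos rfl]
    omega
  · have h0 : eIdx i₀ j₀ = 1 := if_neg (by omega)
    rw [h0, if_neg (by omega)]
    omega

theorem eIdx_val' {i₀ j₀ : ℕ} (hne : i₀ ≠ j₀) :
    (if 1 - eIdx i₀ j₀ = 0 then min i₀ j₀ else max i₀ j₀) = j₀ := by
  rcases Nat.lt_or_ge i₀ j₀ with h | h
  · have h0 : eIdx i₀ j₀ = 0 := if_pos h
    rw [h0, if_neg (by omega)]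
    omega
  · have h0 : eIdx i₀ j₀ = 1 := if_neg (by omega)
    rw [h0, if_pos rfl]
    omega

/-- The sequence of pairs `(f(i₀ + tD), f(j₀ + tD))`. -/
def gSeq (f : ℕ → Fin n → M) (i₀ j₀ : ℕ) : ℕ → Fin (n + n) → M := fun t =>
  Fin.append (f (i₀ + t * (max i₀ j₀ + 1))) (f (j₀ + t * (max i₀ j₀ + 1)))

theorem gSeq_indisc {A : Set M} {f : ℕ → Fin n → M} (hf : IndiscTupleSeqOver L A f)
    {i₀ j₀ : ℕ} (hne : i₀ ≠ j₀) : IndiscTupleSeqOver L A (gSeq f i₀ j₀) := by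
  intro κ s t hs ht
  have heI := eIdx_lt i₀ j₀
  set em : Fin κ × Fin (n + n) → Fin (2 * κ) × Fin n := fun q =>
    if h : q.2.val < n then
      (⟨2 * q.1.val + eIdx i₀ j₀, by have := q.1.isLt; omega⟩, ⟨q.2.val, h⟩)
    else
      (⟨2 * q.1.val + (1 - eIdx i₀ j₀), by have := q.1.isLt; omega⟩,
        ⟨q.2.val - n, by have := q.2.isLt; omega⟩) with hem
  have hflat : ∀ u : Fin κ → ℕ,
      (fun q : Fin κ × Fin (n + n) => gSeq f i₀ j₀ (u q.1) q.2)
        = (fun q : Fin (2 * κ) × Fin n => f (SFun (min i₀ j₀) (max i₀ j₀) u q.1) q.2) ∘ em := by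
    intro u
    funext q
    obtain ⟨r, j⟩ := q
    show gSeq f i₀ j₀ (u r) j = _
    by_cases h : j.val < n
    · have hrhs : ((fun q : Fin (2 * κ) × Fin n =>
          f (SFun (min i₀ j₀) (max i₀ j₀) u q.1) q.2) ∘ em) (r, j)
          = f (SFun (min i₀ j₀) (max i₀ j₀) u
              ⟨2 * r.val + eIdx i₀ j₀, by have := r.isLt; omega⟩) ⟨j.val, h⟩ := by
        rw [hem]; simp only [Function.comp_apply, dif_pos h]
      rw [hrhs, SFun_apply r (eIdx i₀ j₀) heI, eIdx_val hne]
      show Fin.append (f (i₀ + u r * (max i₀ j₀ + 1))) (f (j₀ + u r * (max i₀ j₀ + 1))) j = _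
      rw [fin_append_apply_left _ _ j h]
    · have hrhs : ((fun q : Fin (2 * κ) × Fin n =>
          f (SFun (min i₀ j₀) (max i₀ j₀) u q.1) q.2) ∘ em) (r, j)
          = f (SFun (min i₀ j₀) (max i₀ j₀) u
              ⟨2 * r.val + (1 - eIdx i₀ j₀), by have := r.isLt; omega⟩)
              ⟨j.val - n, by have := j.isLt; omega⟩ := by
        rw [hem]; simp only [Function.comp_apply, dif_neg h]
      rw [hrhs, SFun_apply r (1 - eIdx i₀ j₀) (by omega), eIdx_val' hne]
      show Fin.append (f (i₀ + u r * (max i₀ j₀ + 1))) (f (j₀ + u r * (max i₀ j₀ + 1))) j = _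
      rw [fin_append_apply_right _ _ j h]
  rw [hflat s, hflat t]
  have hlh : min i₀ j₀ < max i₀ j₀ := by omega
  exact (hf (2 * κ) (SFun _ _ s) (SFun _ _ t)
    (SFun_strictMono hlh hs) (SFun_strictMono hlh ht)).comp em

/-- The formula asserting the existence of an alternation pattern. -/
noncomputable def altTheta (φ : L.Formula (Fin m ⊕ Fin n)) (k eI : ℕ) (he : eI < 2) :
    L.Formula ((Fin (2 * k) × Fin n) ⊕ Fin 0) :=
  (conjFin k fun q =>
    (φ.relabel (Sum.elim (Sum.inr : Fin m → (Fin (2 * k) × Fin n) ⊕ Fin m)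
        fun j => Sum.inl ((⟨2 * q.val + eI, by have := q.isLt; omega⟩ : Fin (2 * k)), j))) ⊓
      (φ.relabel (Sum.elim (Sum.inr : Fin m → (Fin (2 * k) × Fin n) ⊕ Fin m)
        fun j => Sum.inl
          ((⟨2 * q.val + (1 - eI), by have := q.isLt; omega⟩ : Fin (2 * k)), j))).not).iExsR
    (Sum.map Sum.inl id)

theorem realize_altTheta {φ : L.Formula (Fin m ⊕ Fin n)} {k eI : ℕ} {he : eI < 2}
    {W : Fin (2 * k) × Fin n → M} {z : Fin 0 → M} :
    (altTheta φ k eI he).Realize (Sum.elim W z) ↔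
      ∃ x : Fin m → M, ∀ q : Fin k,
        φ.Realize (Sum.elim x fun j =>
          W (⟨2 * q.val + eI, by have := q.isLt; omega⟩, j)) ∧
        ¬ φ.Realize (Sum.elim x fun j =>
          W (⟨2 * q.val + (1 - eI), by have := q.isLt; omega⟩, j)) := by
  unfold altTheta
  rw [Formula.realize_iExsR]
  have hsw : ∀ x : Fin m → M,
      (fun y => Sum.elim (Sum.elim W z) x (Sum.map Sum.inl id y)) = Sum.elim W x := by
    intro x; funext y; rcases y with y | y <;> rfl
  have hc1 : ∀ (x : Fin m → M) (q : Fin k),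
      Sum.elim W x ∘ (Sum.elim (Sum.inr : Fin m → (Fin (2 * k) × Fin n) ⊕ Fin m)
        fun j => Sum.inl ((⟨2 * q.val + eI, by have := q.isLt; omega⟩ : Fin (2 * k)), j))
      = Sum.elim x fun j => W (⟨2 * q.val + eI, by have := q.isLt; omega⟩, j) := by
    intro x q; funext y; rcases y with y | y <;> rfl
  have hc2 : ∀ (x : Fin m → M) (q : Fin k),
      Sum.elim W x ∘ (Sum.elim (Sum.inr : Fin m → (Fin (2 * k) × Fin n) ⊕ Fin m)
        fun j => Sum.inl ((⟨2 * q.val + (1 - eI), by have := q.isLt; omega⟩ : Fin (2 * k)), j))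
      = Sum.elim x fun j => W (⟨2 * q.val + (1 - eI), by have := q.isLt; omega⟩, j) := by
    intro x q; funext y; rcases y with y | y <;> rfl
  constructor
  · rintro ⟨x, hx⟩
    rw [hsw, realize_conjFin] at hx
    refine ⟨x, fun q => ?_⟩
    have := hx q
    rw [Formula.realize_inf, Formula.realize_not, Formula.realize_relabel,
      Formula.realize_relabel, hc1 x q, hc2 x q] at this
    exact this
  · rintro ⟨x, hx⟩
    refine ⟨x, ?_⟩
    rw [hsw, realize_conjFin]
    intro q
    rw [Formula.realize_inf, Formula.realize_not, Formula.realize_relabel,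
      Formula.realize_relabel, hc1 x q, hc2 x q]
    exact hx q

theorem strongSplit_divides (hM : IsMonster L M) (hNIP : IsNIP L M) {n : ℕ} {A : Set M}
    {u v : Fin n → M} (hld : LascarDistOne L A u v) (φ : L.Formula (Fin m ⊕ Fin n)) :
    (divPF φ u v : PFormula L M m).Divides A := by
  obtain ⟨f, hf, i₀, j₀, hfi, hfj⟩ := hld
  by_cases huv : u = v
  · refine ⟨fun _ => Fin.append u v, 1, one_pos, rfl, indisc_const _, ?_⟩
    intro s hcard
    rintro ⟨a, ha⟩
    obtain ⟨i, hi⟩ := Finset.card_pos.1 (by omega : 0 < s.card)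
    have h1 := ha i hi
    rw [realize_divPF] at h1
    rw [huv] at h1
    exact h1.2 h1.1
  · have hne : i₀ ≠ j₀ := fun h => huv (by rw [← hfi, ← hfj, h])
    obtain ⟨c, -⟩ := Function.ne_iff.1 huv
    have hMne : Nonempty M := ⟨u c⟩
    have hlh : min i₀ j₀ < max i₀ j₀ := by omega
    set D := max i₀ j₀ + 1 with hD
    by_cases hAlt : ∀ k, ∃ a : Fin m → M, ∀ q < k,
        φ.Realize (Sum.elim a (f (i₀ + q * D))) ∧ ¬ φ.Realize (Sum.elim a (f (j₀ + q * D)))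
    · exfalso
      set φh : L.Formula (Fin m ⊕ Fin n) := if i₀ < j₀ then φ else φ.not with hφh
      set ν : ℕ → ℕ :=
        fun i => min i₀ j₀ + (i % 2) * (max i₀ j₀ - min i₀ j₀) + (i / 2) * D with hν
      have hνe : ∀ t, ν (2 * t) = min i₀ j₀ + t * D := by
        intro t
        rw [hν]
        simp only []
        rw [show (2 * t) % 2 = 0 by omega, show (2 * t) / 2 = t by omega]
        omega
      have hνo : ∀ t, ν (2 * t + 1) = max i₀ j₀ + t * D := by
        intro t
        rw [hν]
        simp only []
        rw [show (2 * t + 1) % 2 = 1 by omega, show (2 * t + 1) / 2 = t by omega]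
        omega
      have hνmono : StrictMono ν := by
        apply strictMono_nat_of_lt_succ
        intro i
        rcases Nat.even_or_odd i with ⟨t, ht⟩ | ⟨t, ht⟩
        · rw [show i = 2 * t by omega, show 2 * t + 1 = 2 * t + 1 from rfl, hνe t, hνo t]
          omega
        · rw [show i = 2 * t + 1 by omega, show 2 * t + 1 + 1 = 2 * (t + 1) by omega,
            hνo t, hνe (t + 1)]
          have hDD : (t + 1) * D = t * D + D := by ring
          omega
      have hFind : IndiscTupleSeqOver L ∅ (f ∘ ν) :=
        (hf.comp hνmono).mono (Set.empty_subset A)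
      have halt : ∀ k, ∃ a : Fin m → M, ∀ i < k,
          (φh.Realize (Sum.elim a ((f ∘ ν) i)) ↔ Even i) := by
        intro k
        obtain ⟨a, ha⟩ := hAlt k
        refine ⟨a, ?_⟩
        intro i hik
        rcases Nat.even_or_odd i with ⟨t, ht⟩ | ⟨t, ht⟩
        · have hi2 : i = 2 * t := by omega
          have hspec := ha t (by omega)
          have hF : (f ∘ ν) i = f (min i₀ j₀ + t * D) := by rw [hi2]; simp [hνe t]
          rw [hF]
          apply iff_of_true _ ⟨t, by omega⟩
          rcases Nat.lt_or_ge i₀ j₀ with hij | hij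
          · rw [hφh, if_pos hij, show min i₀ j₀ = i₀ by omega]
            exact hspec.1
          · rw [hφh, if_neg (by omega), show min i₀ j₀ = j₀ by omega,
              Formula.realize_not]
            exact hspec.2
        · have hi2 : i = 2 * t + 1 := by omega
          have hspec := ha t (by omega)
          have hF : (f ∘ ν) i = f (max i₀ j₀ + t * D) := by rw [hi2]; simp [hνo t]
          rw [hF]
          apply iff_of_false _ (by intro ⟨r, hr⟩; omega)
          rcases Nat.lt_or_ge i₀ j₀ with hij | hij
          · rw [hφh, if_pos hij, show max i₀ j₀ = j₀ by omega]
            exact hspec.2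
          · rw [hφh, if_neg (by omega), show max i₀ j₀ = i₀ by omega,
              Formula.realize_not]
            exact fun hc => hc hspec.1
      exact no_unbounded_alt hM hNIP hFind φh halt
    · push_neg at hAlt
      obtain ⟨k, hk⟩ := hAlt
      have hk0 : 0 < k := by
        rcases Nat.eq_zero_or_pos k with h0 | h0
        · obtain ⟨q, hq, -⟩ := hk fun _ => hMne.some
          omega
        · exact h0
      refine ⟨gSeq f i₀ j₀, k, hk0, ?_, gSeq_indisc hf hne, ?_⟩
      · show Fin.append (f (i₀ + 0 * D)) (f (j₀ + 0 * D)) = Fin.append u v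
        rw [show i₀ + 0 * D = i₀ by omega, show j₀ + 0 * D = j₀ by omega, hfi, hfj]
      · intro s hcard
        rintro ⟨a, ha⟩
        -- transfer to initial positions via indiscernibility
        set O := s.orderIsoOfFin hcard with hO
        have hOmono : StrictMono (fun q : Fin k => ((O q : ℕ))) := by
          intro x y hxy
          exact Subtype.coe_lt_coe.2 (O.lt_iff_lt.2 hxy)
        have hCmono : StrictMono (fun q : Fin k => q.val) := fun x y hxy => hxy
        have heI := eIdx_lt i₀ j₀
        have hst := hf (2 * k) (SFun (min i₀ j₀) (max i₀ j₀) (fun q : Fin k => (O q : ℕ)))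
          (SFun (min i₀ j₀) (max i₀ j₀) (fun q : Fin k => q.val))
          (SFun_strictMono hlh hOmono) (SFun_strictMono hlh hCmono) 0
          (altTheta φ k (eIdx i₀ j₀) heI) Fin.elim0 (fun i => i.elim0)
        have hkey : ∀ (u' : Fin k → ℕ) (q : Fin k) (e : ℕ) (he : e < 2)
            (hb : 2 * q.val + e < 2 * k),
            (fun j => (fun p : Fin (2 * k) × Fin n =>
                f (SFun (min i₀ j₀) (max i₀ j₀) u' p.1) p.2) (⟨2 * q.val + e, hb⟩, j))
              = f ((if e = 0 then min i₀ j₀ else max i₀ j₀) + u' q * (max i₀ j₀ + 1)) := by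
          intro u' q e he hb
          funext j
          show f (SFun (min i₀ j₀) (max i₀ j₀) u' ⟨2 * q.val + e, hb⟩) j = _
          rw [SFun_apply q e he]
        have hL : (altTheta φ k (eIdx i₀ j₀) heI).Realize
            (Sum.elim (fun p : Fin (2 * k) × Fin n =>
              f (SFun (min i₀ j₀) (max i₀ j₀) (fun q : Fin k => (O q : ℕ)) p.1) p.2)
              Fin.elim0) := by
          rw [realize_altTheta]
          refine ⟨a, fun q => ?_⟩
          rw [hkey _ q _ heI, hkey _ q _ (by omega)]
          rw [eIdx_val hne, eIdx_val' hne]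
          have hmem := ha (O q : ℕ) (O q).2
          rw [show gSeq f i₀ j₀ (O q : ℕ)
              = Fin.append (f (i₀ + (O q : ℕ) * (max i₀ j₀ + 1)))
                (f (j₀ + (O q : ℕ) * (max i₀ j₀ + 1))) from rfl,
            realize_divPF] at hmem
          exact hmem
        have hR := hst.mp hL
        rw [realize_altTheta] at hR
        obtain ⟨x, hx⟩ := hR
        have hfin : ∀ q, q < k → φ.Realize (Sum.elim x (f (i₀ + q * D)))
            ∧ ¬ φ.Realize (Sum.elim x (f (j₀ + q * D))) := by
          intro q hq
          have := hx ⟨q, hq⟩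
          rw [hkey _ ⟨q, hq⟩ _ heI, hkey _ ⟨q, hq⟩ _ (by omega),
            eIdx_val hne, eIdx_val' hne] at this
          exact this
        obtain ⟨q, hq, himp⟩ := hk x
        exact (hfin q hq).2 (himp (hfin q hq).1)

end LSF
/-- In an NIP theory, if a type `p ∈ S(B)` Lascar-splits over `A ⊆ B`,
then `p` forks over `A`. -/
theorem lascar_splitting_implies_forking
    (hM : IsMonster L M) (hNIP : IsNIP L M) {m : ℕ}
    (A B : Set M) (hAB : A ⊆ B)
    (p : Set (PFormula L M m)) (hp : IsTypeOver p B)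
    (hls : LascarSplitsOver p B A) :
    ForksOver p A := by
  classical
  obtain ⟨n, b, c, φ, hbB, hcB, hlstp, hbp, hcp⟩ := hls
  obtain ⟨N, x, hx0, hxN, hrel⟩ := LSF.exists_nat_chain hlstp
  refine ⟨N, fun j => LSF.divPF φ (x j.val) (x (j.val + 1)), ?_, ?_⟩
  · intro j
    exact LSF.strongSplit_divides hM hNIP (hrel j.val j.isLt) φ
  · refine ⟨{(⟨n, φ, b⟩ : PFormula L M m), (PFormula.not ⟨n, φ, c⟩ : PFormula L M m)}, ?_, ?_⟩
    · intro ψ hψ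
      simp only [Finset.coe_insert, Finset.coe_singleton, Set.mem_insert_iff,
        Set.mem_singleton_iff] at hψ
      rcases hψ with h | h
      · rw [h]; exact hbp
      · rw [h]; exact hcp
    · intro a hsa
      have h1 : φ.Realize (Sum.elim a b) := hsa _ (Finset.mem_insert_self _ _)
      have h2 : ¬ φ.Realize (Sum.elim a c) := by
        have h3 : (φ.not : L.Formula (Fin m ⊕ Fin n)).Realize (Sum.elim a c) :=
          hsa _ (Finset.mem_insert_of_mem (Finset.mem_singleton_self _))
        exact (FirstOrder.Language.Formula.realize_not).1 h3
      obtain ⟨j, hj, hPj, hPj'⟩ := LSF.exists_descent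
        (P := fun i => φ.Realize (Sum.elim a (x i)))
        (by show φ.Realize (Sum.elim a (x 0)); rw [hx0]; exact h1)
        (by show ¬ φ.Realize (Sum.elim a (x N)); rw [hxN]; exact h2)
      refine ⟨⟨j, hj⟩, ?_⟩
      rw [LSF.realize_divPF']
      exact ⟨hPj, hPj'⟩
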